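/- Let k+1 ≤ s and let l ∈ I(μ,s+1)' (i.e., l ∈ I(μ,s+1) with q_l = 0). Then there exist m ∈ I(μ,s)' and r ∈ {1,...,n} such that l = m + ε_r and μ_r + |μ| − r + m_r + 1 ≠ 0, where the hypothesis is that I(μ,j)' is nonempty only for j ≥ k+1 and I(μ,k+1)' = {(k+1)ε_t} for some t. -/
import Mathlib


noncomputable section

variable (n : ℕ)

/-- The index set I(μ,j) of (2.11). -/
def Iset (μ : Fin n → ℂ) (j : ℕ) : Set (Fin n → ℕ) :=
  {c | (∑ i, c i) = j ∧
    ∀ s t : Fin n, (s : ℕ) + 1 = (t : ℕ) →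
      ∃ m : ℕ, μ s - μ t = (m : ℂ) ∧ c t ≤ m}

/-- The scalar q_c of Lemma 3.2.3. -/
def qc (μ : Fin n → ℂ) (c : Fin n → ℕ) : ℂ :=
  ∏ s : Fin n, ∏ i ∈ Finset.range (c s),
    (μ s + (∑ j, μ j) - ((s : ℕ) + 1) + (i + 1))

def scol (r : Fin n) (j : ℕ) : Fin n → ℕ := fun i => if i = r then j else 0

lemma sum_scol (r : Fin n) (j : ℕ) : (∑ i, scol n r j i) = j := by
  simp [scol]

lemma qc_scol (μ : Fin n → ℂ) (r : Fin n) (j : ℕ) :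
    qc n μ (scol n r j) = ∏ i ∈ Finset.range j,
      (μ r + (∑ j', μ j') - ((r : ℕ) + 1) + (i + 1)) := by
  unfold qc scol
  rw [Fintype.prod_eq_single r]
  · simp
  · intro s hs; simp [hs]

lemma scol_mem (μ : Fin n → ℂ) (r : Fin n) (j j' : ℕ) (l : Fin n → ℕ)
    (hl : l ∈ Iset n μ j') (hj : j ≤ l r) : scol n r j ∈ Iset n μ j := by
  refine ⟨sum_scol n r j, ?_⟩
  intro a b hab
  obtain ⟨m, hm, hcb⟩ := hl.2 a b hab
  refine ⟨m, hm, ?_⟩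
  by_cases hbr : b = r
  · subst hbr; simpa [scol] using le_trans hj hcb
  · simp [scol, hbr]

lemma mu_diff (μ : Fin n → ℂ)
    (hdom : ∀ i : Fin n, ∀ h : (i : ℕ) + 1 < n,
      ∃ m : ℕ, μ i - μ ⟨(i : ℕ) + 1, h⟩ = (m : ℂ)) :
    ∀ c : ℕ, ∀ a b : Fin n, (a : ℕ) + c = (b : ℕ) → ∃ d : ℕ, μ a - μ b = (d : ℂ) := by
  intro c
  induction c with
  | zero =>
    intro a b h
    have : a = b := Fin.ext (by omega)
    subst this
    exact ⟨0, by simp⟩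
  | succ c ih =>
    intro a b h
    have h1 : (a : ℕ) + 1 < n := by have := b.isLt; omega
    obtain ⟨m, hm⟩ := hdom a h1
    obtain ⟨d, hd⟩ := ih ⟨(a : ℕ) + 1, h1⟩ b (by simp; omega)
    exact ⟨m + d, by push_cast; rw [← hm, ← hd]; ring⟩

lemma A_diff (μ : Fin n → ℂ)
    (hdom : ∀ i : Fin n, ∀ h : (i : ℕ) + 1 < n,
      ∃ m : ℕ, μ i - μ ⟨(i : ℕ) + 1, h⟩ = (m : ℂ))
    (a b : Fin n) (hab : (a : ℕ) ≤ (b : ℕ)) :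
    ∃ d : ℕ, μ a + (∑ j, μ j) - ((a : ℕ) + 1) =
      (μ b + (∑ j, μ j) - ((b : ℕ) + 1)) + d + (((b : ℕ) : ℂ) - ((a : ℕ) : ℂ)) := by
  obtain ⟨d, hd⟩ := mu_diff n μ hdom ((b : ℕ) - (a : ℕ)) a b (by omega)
  refine ⟨d, ?_⟩
  linear_combination hd

/-- Lemma 3.3.5: if I(μ,j)' = ∅ for j ≤ k, I(μ,k+1)' = {(k+1)ε_t}, s ≥ k+1 and
l ∈ I(μ,s+1)' then l = m + ε_r with m ∈ I(μ,s)' and μ_r + |μ| − r + m_r + 1 ≠ 0. -/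
theorem descent_of_exceptional_weights
    (μ : Fin n → ℂ)
    (hdom : ∀ i : Fin n, ∀ h : (i : ℕ) + 1 < n,
      ∃ m : ℕ, μ i - μ ⟨(i : ℕ) + 1, h⟩ = (m : ℂ))
    (k : ℕ)
    (hbelow : ∀ j : ℕ, j ≤ k → ∀ c ∈ Iset n μ j, qc n μ c ≠ 0)
    (t : Fin n)
    (hsingle : {c : Fin n → ℕ | c ∈ Iset n μ (k + 1) ∧ qc n μ c = 0}
      = {fun i => if i = t then k + 1 else 0})
    (s : ℕ) (hs : k + 1 ≤ s)
    (l : Fin n → ℕ) (hl : l ∈ Iset n μ (s + 1)) (hql : qc n μ l = 0) :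
    ∃ (m : Fin n → ℕ) (r : Fin n),
      m ∈ Iset n μ s ∧ qc n μ m = 0 ∧
      l = (fun i => m i + if i = r then 1 else 0) ∧
      μ r + (∑ j, μ j) - ((r : ℕ) + 1) + (m r : ℂ) + 1 ≠ 0 := by
  -- Step 1 : μ t + |μ| - (t+1) = -(k+1)
  have htmem : scol n t (k + 1) ∈ {c : Fin n → ℕ | c ∈ Iset n μ (k + 1) ∧ qc n μ c = 0} := by
    rw [hsingle]; rfl
  have hAt : μ t + (∑ j, μ j) - ((t : ℕ) + 1) + ((k : ℂ) + 1) = 0 := by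
    obtain ⟨htI, htq⟩ := htmem
    rw [qc_scol] at htq
    obtain ⟨i, hi, hiz⟩ := Finset.prod_eq_zero_iff.mp htq
    rw [Finset.mem_range] at hi
    rcases Nat.lt_or_ge i k with hik | hik
    · exfalso
      apply hbelow (i + 1) (by omega) (scol n t (i + 1))
        (scol_mem n μ t (i + 1) (k + 1) (scol n t (k + 1)) htI (by simp [scol]; omega))
      rw [qc_scol]
      exact Finset.prod_eq_zero (Finset.mem_range.mpr (Nat.lt_succ_self i)) hiz
    · have hik' : i = k := by omega
      subst hik'
      exact hiz
  -- Step 2 : find the index r to descend at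
  have hkey : ∃ r : Fin n, 1 ≤ l r ∧
      μ r + (∑ j, μ j) - ((r : ℕ) + 1) + (l r : ℂ) ≠ 0 := by
    by_contra hcon
    push_neg at hcon
    -- every index in the support must be t with l t = k+1
    have hclaim : ∀ i : Fin n, 1 ≤ l i → i = t ∧ l i = k + 1 := by
      intro i hi1
      have hAi : μ i + (∑ j, μ j) - ((i : ℕ) + 1) + (l i : ℂ) = 0 := hcon i hi1
      -- (b) l i ≥ k + 1
      have hb : k + 1 ≤ l i := by
        by_contra hb'
        apply hbelow (l i) (by omega) (scol n i (l i))
          (scol_mem n μ i (l i) (s + 1) l hl le_rfl)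
        rw [qc_scol]
        apply Finset.prod_eq_zero (Finset.mem_range.mpr (Nat.sub_lt hi1 one_pos))
        have : ((l i - 1 : ℕ) : ℂ) + 1 = (l i : ℂ) := by
          rw [Nat.cast_sub hi1]; ring
        rw [this]; exact hAi
      -- (c) i ≤ t
      have hc : (i : ℕ) ≤ (t : ℕ) := by
        rcases Nat.eq_zero_or_pos (i : ℕ) with hi0 | hi0
        · omega
        · set p : Fin n := ⟨(i : ℕ) - 1, by have := i.isLt; omega⟩ with hp
          obtain ⟨M, hM, hlM⟩ := hl.2 p i (by simp [hp]; omega)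
          by_contra hct
          push_neg at hct
          obtain ⟨d, hd⟩ := A_diff n μ hdom t p (by simp [hp]; omega)
          -- A t = A p + d + (p - t), A p = -(l i) + M + 1, A t = -(k+1)
          have : ((l i + (t : ℕ) : ℕ) : ℂ) = ((k + 1 + (i : ℕ) + M + d : ℕ) : ℂ) := by
            push_cast
            linear_combination hd + hAi + hM - hAt
          have := Nat.cast_inj (R := ℂ).mp this
          omega
      -- (d) conclude
      obtain ⟨d, hd⟩ := A_diff n μ hdom i t hc
      have : ((k + 1 + (i : ℕ) : ℕ) : ℂ) = ((l i + d + (t : ℕ) : ℕ) : ℂ) := by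
        push_cast
        linear_combination hd - hAi + hAt
      have heq := Nat.cast_inj (R := ℂ).mp this
      have hit : (i : ℕ) = (t : ℕ) := by omega
      exact ⟨Fin.ext hit, by omega⟩
    -- sum over support gives a contradiction
    have hsum : (∑ i, l i) = l t := by
      apply Fintype.sum_eq_single t
      intro i hit
      by_contra h0
      exact hit (hclaim i (by omega)).1
    rcases Nat.eq_zero_or_pos (l t) with h0 | h0
    · have := hl.1; omega
    · have := (hclaim t h0).2
      have := hl.1
      omega
  obtain ⟨r, hr1, hr2⟩ := hkey
  -- construct m
  set m : Fin n → ℕ := fun i => l i - (if i = r then 1 else 0) with hmdef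
  have hlm : l = fun i => m i + if i = r then 1 else 0 := by
    funext i
    by_cases hir : i = r
    · subst hir; simp [hmdef]; omega
    · simp [hmdef, hir]
  have hmr : l r = m r + 1 := by simp [hmdef]; omega
  have hsum : (∑ i, l i) = (∑ i, m i) + 1 := by
    conv_lhs => rw [hlm]
    rw [Finset.sum_add_distrib]
    simp
  have hmI : m ∈ Iset n μ s := by
    refine ⟨by have := hl.1; omega, ?_⟩
    intro a b hab
    obtain ⟨M, hM, hlM⟩ := hl.2 a b hab
    exact ⟨M, hM, le_trans (Nat.sub_le _ _) hlM⟩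
  have hfact : qc n μ l = qc n μ m *
      (μ r + (∑ j, μ j) - ((r : ℕ) + 1) + ((m r : ℂ) + 1)) := by
    have h1 : ∀ x : Fin n, x ∈ Finset.univ →
        (∏ i ∈ Finset.range (l x), (μ x + (∑ j, μ j) - ((x : ℕ) + 1) + (i + 1)))
        = (∏ i ∈ Finset.range (m x), (μ x + (∑ j, μ j) - ((x : ℕ) + 1) + (i + 1))) *
          (if x = r then (μ r + (∑ j, μ j) - ((r : ℕ) + 1) + ((m r : ℂ) + 1)) else 1) := by
      intro x _
      by_cases hxr : x = r
      · subst hxr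
        rw [hmr, Finset.prod_range_succ, if_pos rfl]
      · have : l x = m x := by simp [hmdef, hxr]
        rw [this, if_neg hxr, mul_one]
    unfold qc
    rw [Finset.prod_congr rfl h1, Finset.prod_mul_distrib]
    congr 1
    simp
  have hqm : qc n μ m = 0 := by
    have htop : (μ r + (∑ j, μ j) - ((r : ℕ) + 1) + ((m r : ℂ) + 1)) ≠ 0 := by
      intro h
      apply hr2
      rw [hmr]; push_cast; linear_combination h
    rw [hfact] at hql
    exact (mul_eq_zero.mp hql).resolve_right htop
  refine ⟨m, r, hmI, hqm, hlm, ?_⟩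
  intro h
  apply hr2
  rw [hmr]; push_cast; linear_combination h
end
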